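/- If a quasi-inductive system of ideals (I_i, π_{i,j})_{i≤j, i,j∈I} is coherent and satisfies condition (C) (for all i ≤ j ≤ k, π_{j,k}⁻¹(dom(π_{i,j})) ⊆ dom(π_{i,k})), then its inductive limit lim←(I_i) is an ideal. -/

import Mathlib

/-- An ideal on a set `X`: a family of subsets of `X` closed under subsets and
finite unions, containing all finite sets, and proper. -/
structure IdealOn (X : Type*) where
  sets : Set (Set X)
  subset_mem : ∀ ⦃A B : Set X⦄, A ∈ sets → B ⊆ A → B ∈ sets
  union_mem : ∀ ⦃A B : Set X⦄, A ∈ sets → B ∈ sets → A ∪ B ∈ sets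
  finite_mem : ∀ A : Set X, A.Finite → A ∈ sets
  univ_not_mem : Set.univ ∉ sets

/-- The dual filter of an ideal: the family of complements of its members. -/
def IdealOn.dual {X : Type*} (I : IdealOn X) : Set (Set X) := (·ᶜ) '' I.sets

/-- A quasi-inductive system of ideals: ideals `idl i` on `X i` over a preorder
`ι`, together with quasi-homomorphisms `map h : X j → X i` (for `h : i ≤ j`)
defined on `dom h ∈ (idl j)*` with preimages of `idl i`-sets in `idl j`
(the values of `map h` outside `dom h` are irrelevant). -/
structure QuasiSystem (ι : Type*) [Preorder ι] (X : ι → Type*) where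
  idl : ∀ i, IdealOn (X i)
  dom : ∀ {i j : ι}, i ≤ j → Set (X j)
  map : ∀ {i j : ι}, i ≤ j → X j → X i
  dom_mem : ∀ {i j : ι} (h : i ≤ j), (dom h)ᶜ ∈ (idl j).sets
  preimage_mem : ∀ {i j : ι} (h : i ≤ j), ∀ A ∈ (idl i).sets,
    {x : X j | x ∈ dom h ∧ map h x ∈ A} ∈ (idl j).sets

/-- Coherence: `π_{i,k} = π_{i,j} ∘ π_{j,k}` on the appropriate common domain. -/
def QuasiSystem.Coherent {ι : Type*} [Preorder ι] {X : ι → Type*}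
    (S : QuasiSystem ι X) : Prop :=
  ∀ {i j k : ι} (hij : i ≤ j) (hjk : j ≤ k) (x : X k),
    x ∈ S.dom (hij.trans hjk) → x ∈ S.dom hjk → S.map hjk x ∈ S.dom hij →
    S.map (hij.trans hjk) x = S.map hij (S.map hjk x)

/-- Condition (C): the system is coherent and
`π_{j,k}⁻¹(dom(π_{i,j})) ⊆ dom(π_{i,k})` for all `i ≤ j ≤ k`. -/
def QuasiSystem.CondC {ι : Type*} [Preorder ι] {X : ι → Type*}
    (S : QuasiSystem ι X) : Prop :=
  S.Coherent ∧ ∀ {i j k : ι} (hij : i ≤ j) (hjk : j ≤ k) (x : X k),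
    x ∈ S.dom hjk → S.map hjk x ∈ S.dom hij → x ∈ S.dom (hij.trans hjk)

/-- The inductive limit: all `M ⊆ ∑_i dom(I_i)` such that for some `i` and some
`P` in the dual filter of `I_i`, `M` is disjoint from `∑_{j≥i} π_{i,j}⁻¹[P]`. -/
def QuasiSystem.limit {ι : Type*} [Preorder ι] {X : ι → Type*}
    (S : QuasiSystem ι X) : Set (Set (Σ i, X i)) :=
  {M | ∃ i : ι, ∃ P : Set (X i), Pᶜ ∈ (S.idl i).sets ∧
    ∀ (j : ι) (h : i ≤ j), ∀ x : X j, x ∈ S.dom h → S.map h x ∈ P →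
      (⟨j, x⟩ : Σ i, X i) ∉ M}

/-- `Ī_i`: the members of the inductive limit witnessed by the index `i`. -/
def QuasiSystem.Ibar {ι : Type*} [Preorder ι] {X : ι → Type*}
    (S : QuasiSystem ι X) (i : ι) : Set (Set (Σ i, X i)) :=
  {M | ∃ P : Set (X i), Pᶜ ∈ (S.idl i).sets ∧
    ∀ (j : ι) (h : i ≤ j), ∀ x : X j, x ∈ S.dom h → S.map h x ∈ P →
      (⟨j, x⟩ : Σ i, X i) ∉ M}

/-- If a quasi-inductive system of ideals over a (nonempty)
directed index set is coherent and satisfies condition (C), then its inductive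
limit is an ideal. -/
theorem limit_isIdeal_of_condC {ι : Type*} [Preorder ι] [Nonempty ι]
    {X : ι → Type*} (hdir : ∀ i j : ι, ∃ k, i ≤ k ∧ j ≤ k)
    (S : QuasiSystem ι X) (hC : S.CondC) :
    ∃ K : IdealOn (Σ i, X i), K.sets = S.limit := by
  obtain ⟨hcoh, hcnd⟩ := hC
  -- monotonicity of Ibar
  have mono : ∀ {i k : ι} (h : i ≤ k) {M : Set (Σ i, X i)},
      M ∈ S.Ibar i → M ∈ S.Ibar k := by
    intro i k h M hM
    obtain ⟨P, hP, hMP⟩ := hM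
    refine ⟨{y : X k | y ∈ S.dom h ∧ S.map h y ∈ P}, ?_, ?_⟩
    · have : {y : X k | y ∈ S.dom h ∧ S.map h y ∈ P}ᶜ
          = (S.dom h)ᶜ ∪ {y : X k | y ∈ S.dom h ∧ S.map h y ∈ Pᶜ} := by
        ext y
        by_cases hy : y ∈ S.dom h <;> simp [hy]
      rw [this]
      exact (S.idl k).union_mem (S.dom_mem h) (S.preimage_mem h _ hP)
    · intro j hkj x hx hmx
      obtain ⟨hd, hmP⟩ := hmx
      have hdom : x ∈ S.dom (h.trans hkj) := hcnd h hkj x hx hd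
      have := hcoh h hkj x hdom hx hd
      exact hMP j (h.trans hkj) x hdom (this ▸ hmP)
  -- singletons are in the limit
  have hsingle : ∀ z : (Σ i, X i), {z} ∈ S.limit := by
    rintro ⟨j, x⟩
    by_cases hx : x ∈ S.dom (le_refl j)
    · refine ⟨j, {S.map (le_refl j) x}ᶜ, ?_, ?_⟩
      · rw [compl_compl]
        exact (S.idl j).finite_mem _ (Set.finite_singleton _)
      · intro k h y hy hmy heq
        rw [Set.mem_singleton_iff] at heq
        obtain ⟨rfl, hxy⟩ := Sigma.mk.inj_iff.mp heq
        rw [heq_iff_eq] at hxy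
        subst hxy
        exact hmy rfl
    · refine ⟨j, Set.univ, ?_, ?_⟩
      · rw [Set.compl_univ]
        exact (S.idl j).finite_mem _ Set.finite_empty
      · intro k h y hy _ heq
        rw [Set.mem_singleton_iff] at heq
        obtain ⟨rfl, hxy⟩ := Sigma.mk.inj_iff.mp heq
        rw [heq_iff_eq] at hxy
        subst hxy
        exact hx hy
  -- union closure
  have hunion : ∀ ⦃A B : Set (Σ i, X i)⦄, A ∈ S.limit → B ∈ S.limit →
      A ∪ B ∈ S.limit := by
    rintro A B ⟨i, P, hP, hA⟩ ⟨i', Q, hQ, hB⟩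
    obtain ⟨k, hik, hi'k⟩ := hdir i i'
    obtain ⟨P', hP', hA'⟩ := mono hik (M := A) ⟨P, hP, hA⟩
    obtain ⟨Q', hQ', hB'⟩ := mono hi'k (M := B) ⟨Q, hQ, hB⟩
    refine ⟨k, P' ∩ Q', ?_, ?_⟩
    · rw [Set.compl_inter]
      exact (S.idl k).union_mem hP' hQ'
    · intro j h x hx hm
      rcases hm with ⟨hm1, hm2⟩
      rintro (hA2 | hB2)
      · exact hA' j h x hx hm1 hA2
      · exact hB' j h x hx hm2 hB2
  refine ⟨⟨S.limit, ?_, hunion, ?_, ?_⟩, rfl⟩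
  · rintro A B ⟨i, P, hP, hA⟩ hBA
    exact ⟨i, P, hP, fun j h x hx hm hB => hA j h x hx hm (hBA hB)⟩
  · intro A hA
    refine Set.Finite.induction_on A hA ?_ ?_
    · obtain ⟨i⟩ := ‹Nonempty ι›
      refine ⟨i, Set.univ, ?_, fun _ _ _ _ _ => not_false⟩
      rw [Set.compl_univ]
      exact (S.idl i).finite_mem _ Set.finite_empty
    · intro a s _ _ hs
      rw [Set.insert_eq]
      exact hunion (hsingle a) hs
  · rintro ⟨i, P, hP, huniv⟩
    apply (S.idl i).univ_not_mem
    have : (Set.univ : Set (X i)) =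
        (S.dom (le_refl i))ᶜ ∪ {x : X i | x ∈ S.dom (le_refl i) ∧ S.map (le_refl i) x ∈ Pᶜ} := by
      ext x
      simp only [Set.mem_univ, true_iff, Set.mem_union, Set.mem_compl_iff, Set.mem_setOf_eq]
      by_cases hx : x ∈ S.dom (le_refl i)
      · refine Or.inr ⟨hx, fun hm => ?_⟩
        exact huniv i (le_refl i) x hx hm (Set.mem_univ _)
      · exact Or.inl hx
    rw [this]
    exact (S.idl i).union_mem (S.dom_mem _) (S.preimage_mem _ _ hP)
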